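/- arXiv:1803.05838 — 2 statements merged into one kernel-verified Lean document; each statement's English description precedes it below -/
import Mathlib

section
/- Let S1, S2 be equivalence relations on a set V and X ⊆ V. If S1∖X = S1 (i.e., no element of X is related by S1 to a distinct element), then (S1 ⊔ S2)∖X = (S1∖X) ⊔ (S2∖X) = S1 ⊔ (S2∖X), where ⊔ is the join of equivalence relations and S∖X is the restriction removing X. -/
/-- The restriction `S∖X`: relates `a` and `b` iff `a = b`, or `(a,b) ∈ S` with `a ∉ X`, `b ∉ X`. -/
def Setoid.restrict {V : Type*} (S : Setoid V) (X : Set V) : Setoid V where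
  r a b := a = b ∨ (S.r a b ∧ a ∉ X ∧ b ∉ X)
  iseqv := by
    constructor
    · intro a; exact Or.inl rfl
    · rintro a b (rfl | ⟨h, ha, hb⟩)
      · exact Or.inl rfl
      · exact Or.inr ⟨S.symm h, hb, ha⟩
    · rintro a b c (rfl | ⟨h, ha, hb⟩) (rfl | ⟨h', hb', hc⟩)
      · exact Or.inl rfl
      · exact Or.inr ⟨h', hb', hc⟩
      · exact Or.inr ⟨h, ha, hb⟩
      · exact Or.inr ⟨S.trans h h', ha, hc⟩

private def URel {V : Type*} (S2 T : Setoid V) (X : Set V) (a b : V) : Prop :=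
  (a ∉ X ∧ b ∉ X ∧ T.r a b) ∨
  (a ∈ X ∧ b ∉ X ∧ ∃ c, c ∉ X ∧ S2.r a c ∧ T.r c b) ∨
  (a ∉ X ∧ b ∈ X ∧ ∃ c, c ∉ X ∧ T.r a c ∧ S2.r c b) ∨
  (a ∈ X ∧ b ∈ X ∧ (a = b ∨ S2.r a b ∨
    ∃ c d, c ∉ X ∧ d ∉ X ∧ S2.r a c ∧ T.r c d ∧ S2.r d b))

private lemma urel_refl {V : Type*} (S2 T : Setoid V) (X : Set V) (a : V) :
    URel S2 T X a a := by
  by_cases ha : a ∈ X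
  · exact Or.inr (Or.inr (Or.inr ⟨ha, ha, Or.inl rfl⟩))
  · exact Or.inl ⟨ha, ha, T.refl a⟩

private lemma urel_symm {V : Type*} {S2 T : Setoid V} {X : Set V} {a b : V}
    (hab : URel S2 T X a b) : URel S2 T X b a := by
  rcases hab with ⟨ha, hb, hT⟩ | ⟨ha, hb, c, hc, h2, hT⟩ | ⟨ha, hb, c, hc, hT, h2⟩ |
    ⟨ha, hb, rfl | h2 | ⟨c, d, hc, hd, h2, hT, h2'⟩⟩
  · exact Or.inl ⟨hb, ha, T.symm hT⟩
  · exact Or.inr (Or.inr (Or.inl ⟨hb, ha, c, hc, T.symm hT, S2.symm h2⟩))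
  · exact Or.inr (Or.inl ⟨hb, ha, c, hc, S2.symm h2, T.symm hT⟩)
  · exact Or.inr (Or.inr (Or.inr ⟨hb, ha, Or.inl rfl⟩))
  · exact Or.inr (Or.inr (Or.inr ⟨hb, ha, Or.inr (Or.inl (S2.symm h2))⟩))
  · exact Or.inr (Or.inr (Or.inr ⟨hb, ha, Or.inr (Or.inr
      ⟨d, c, hd, hc, S2.symm h2', T.symm hT, S2.symm h2⟩)⟩))

private lemma urel_trans {V : Type*} {S2 T : Setoid V} {X : Set V}
    (hT2 : ∀ c d, c ∉ X → d ∉ X → S2.r c d → T.r c d) {a b c : V}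
    (hab : URel S2 T X a b) (hbc : URel S2 T X b c) : URel S2 T X a c := by
  rcases hab with ⟨ha, hb, hT⟩ | ⟨ha, hb, p, hp, h2, hT⟩ | ⟨ha, hb, p, hp, hT, h2⟩ |
    ⟨ha, hb, hii⟩ <;>
  rcases hbc with ⟨hb', hc, hT'⟩ | ⟨hb', hc, q, hq, h2', hT'⟩ | ⟨hb', hc, q, hq, hT', h2'⟩ |
    ⟨hb', hc, hii'⟩
  · exact Or.inl ⟨ha, hc, T.trans hT hT'⟩
  · exact absurd hb' hb
  · exact Or.inr (Or.inr (Or.inl ⟨ha, hc, q, hq, T.trans hT hT', h2'⟩))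
  · exact absurd hb' hb
  · exact Or.inr (Or.inl ⟨ha, hc, p, hp, h2, T.trans hT hT'⟩)
  · exact absurd hb' hb
  · exact Or.inr (Or.inr (Or.inr ⟨ha, hc, Or.inr (Or.inr
      ⟨p, q, hp, hq, h2, T.trans hT hT', h2'⟩)⟩))
  · exact absurd hb' hb
  · exact absurd hb hb'
  · -- NI + IN : a ∉ X, c ∉ X
    exact Or.inl ⟨ha, hc, T.trans hT (T.trans (hT2 p q hp hq (S2.trans h2 h2')) hT')⟩
  · exact absurd hb hb'
  · -- NI + II : a ∉ X, c ∈ X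
    rcases hii' with rfl | h2' | ⟨u, v, hu, hv, h2', hT', h2''⟩
    · exact Or.inr (Or.inr (Or.inl ⟨ha, hc, p, hp, hT, h2⟩))
    · exact Or.inr (Or.inr (Or.inl ⟨ha, hc, p, hp, hT, S2.trans h2 h2'⟩))
    · exact Or.inr (Or.inr (Or.inl ⟨ha, hc, v, hv,
        T.trans hT (T.trans (hT2 p u hp hu (S2.trans h2 h2')) hT'), h2''⟩))
  · -- II + NN : impossible
    exact absurd hb hb'
  · -- II + IN : a ∈ X, c ∉ X
    rcases hii with rfl | h2a | ⟨u, v, hu, hv, h2a, hTa, h2b⟩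
    · exact Or.inr (Or.inl ⟨ha, hc, q, hq, h2', hT'⟩)
    · exact Or.inr (Or.inl ⟨ha, hc, q, hq, S2.trans h2a h2', hT'⟩)
    · exact Or.inr (Or.inl ⟨ha, hc, u, hu, h2a,
        T.trans hTa (T.trans (hT2 v q hv hq (S2.trans h2b h2')) hT')⟩)
  · exact absurd hb hb'
  · -- II + II
    refine Or.inr (Or.inr (Or.inr ⟨ha, hc, ?_⟩))
    rcases hii with rfl | h2 | ⟨u, v, hu, hv, h2, hT, h2'⟩
    · exact hii'
    · rcases hii' with rfl | h2' | ⟨u, v, hu, hv, h2', hT', h2''⟩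
      · exact Or.inr (Or.inl h2)
      · exact Or.inr (Or.inl (S2.trans h2 h2'))
      · exact Or.inr (Or.inr ⟨u, v, hu, hv, S2.trans h2 h2', hT', h2''⟩)
    · rcases hii' with rfl | h2'' | ⟨u', v', hu', hv', h2'', hT'', h2'''⟩
      · exact Or.inr (Or.inr ⟨u, v, hu, hv, h2, hT, h2'⟩)
      · exact Or.inr (Or.inr ⟨u, v, hu, hv, h2, hT, S2.trans h2' h2''⟩)
      · exact Or.inr (Or.inr ⟨u, v', hu, hv', h2,
          T.trans hT (T.trans (hT2 v u' hv hu' (S2.trans h2' h2'')) hT''), h2'''⟩)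

theorem stmt6 {V : Type*} (S1 S2 : Setoid V) (X : Set V) (h : S1.restrict X = S1) :
    (S1 ⊔ S2).restrict X = (S1.restrict X) ⊔ (S2.restrict X) ∧
      (S1 ⊔ S2).restrict X = S1 ⊔ (S2.restrict X) := by
  -- key consequence of h
  have hX : ∀ a b, S1.r a b → a = b ∨ (a ∉ X ∧ b ∉ X) := by
    intro a b hab
    rw [← h] at hab
    rcases hab with rfl | ⟨_, ha, hb⟩
    · exact Or.inl rfl
    · exact Or.inr ⟨ha, hb⟩
  set T : Setoid V := S1 ⊔ (S2.restrict X) with hT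
  have hT2 : ∀ c d, c ∉ X → d ∉ X → S2.r c d → T.r c d := by
    intro c d hc hd h2
    exact (le_sup_right : S2.restrict X ≤ T) (Or.inr ⟨h2, hc, hd⟩)
  have hT1 : S1 ≤ T := le_sup_left
  -- the explicit equivalence relation U
  let U : Setoid V := ⟨URel S2 T X,
    ⟨urel_refl S2 T X, urel_symm, urel_trans hT2⟩⟩
  have hU1 : S1 ≤ U := by
    intro a b hab
    rcases hX a b hab with rfl | ⟨ha, hb⟩
    · exact urel_refl S2 T X a
    · exact Or.inl ⟨ha, hb, hT1 hab⟩
  have hU2 : S2 ≤ U := by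
    intro a b hab
    by_cases ha : a ∈ X <;> by_cases hb : b ∈ X
    · exact Or.inr (Or.inr (Or.inr ⟨ha, hb, Or.inr (Or.inl hab)⟩))
    · exact Or.inr (Or.inl ⟨ha, hb, b, hb, hab, T.refl b⟩)
    · exact Or.inr (Or.inr (Or.inl ⟨ha, hb, a, ha, T.refl a, hab⟩))
    · exact Or.inl ⟨ha, hb, hT2 a b ha hb hab⟩
  have hsupU : S1 ⊔ S2 ≤ U := sup_le hU1 hU2
  have main : (S1 ⊔ S2).restrict X = T := by
    apply le_antisymm
    · intro a b hab
      rcases hab with rfl | ⟨hab, ha, hb⟩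
      · exact T.refl a
      · rcases hsupU hab with ⟨_, _, hTab⟩ | ⟨ha', _, _⟩ | ⟨_, hb', _⟩ | ⟨ha', _, _⟩
        · exact hTab
        · exact absurd ha' ha
        · exact absurd hb' hb
        · exact absurd ha' ha
    · refine sup_le ?_ ?_
      · intro a b hab
        rcases hX a b hab with rfl | ⟨ha, hb⟩
        · exact Or.inl rfl
        · exact Or.inr ⟨(le_sup_left : S1 ≤ S1 ⊔ S2) hab, ha, hb⟩
      · rintro a b (rfl | ⟨hab, ha, hb⟩)
        · exact Or.inl rfl
        · exact Or.inr ⟨(le_sup_right : S2 ≤ S1 ⊔ S2) hab, ha, hb⟩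
  exact ⟨by rw [main, h], main⟩
end

section
/- Let S1, S2 be equivalence relations on a set V, X ⊆ V with S1∖X = S1, and let x, y ∉ X with x ≠ y. If (x,y) ∈ S1 ⊔ S2, then every alternating chain witnessing this membership avoids X; consequently (x,y) ∈ S1 ⊔ (S2∖X). -/
section Aux
variable {V : Type*} (S1 S2 : Setoid V) (X : Set V)

/-- Bridging relation. -/
def auxQ (a b : V) : Prop :=
  (a ∉ X ∧ b ∉ X ∧ (S1 ⊔ S2.restrict X).r a b) ∨
  (a ∈ X ∧ b ∈ X ∧ (S2.r a b ∨
      ∃ c d, c ∉ X ∧ d ∉ X ∧ S2.r a c ∧ (S1 ⊔ S2.restrict X).r c d ∧ S2.r d b)) ∨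
  (a ∈ X ∧ b ∉ X ∧ ∃ c, c ∉ X ∧ S2.r a c ∧ (S1 ⊔ S2.restrict X).r c b) ∨
  (a ∉ X ∧ b ∈ X ∧ ∃ c, c ∉ X ∧ (S1 ⊔ S2.restrict X).r a c ∧ S2.r c b)

lemma auxJ_of_S2 {a b : V} (ha : a ∉ X) (hb : b ∉ X) (hab : S2.r a b) :
    (S1 ⊔ S2.restrict X).r a b :=
  (Setoid.le_def.mp le_sup_right) (Or.inr ⟨hab, ha, hb⟩)

/-- `auxQ` is an equivalence relation. -/
def auxQSetoid : Setoid V where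
  r := auxQ S1 S2 X
  iseqv := by
    set J := S1 ⊔ S2.restrict X with hJ
    have bridge : ∀ {c d : V}, c ∉ X → d ∉ X → S2.r c d → J.r c d :=
      fun hc hd h => auxJ_of_S2 S1 S2 X hc hd h
    constructor
    · intro a
      by_cases ha : a ∈ X
      · exact Or.inr (Or.inl ⟨ha, ha, Or.inl (S2.refl a)⟩)
      · exact Or.inl ⟨ha, ha, J.refl a⟩
    · rintro a b (⟨ha, hb, hab⟩ | ⟨ha, hb, hab | ⟨c, d, hc, hd, h1, h2, h3⟩⟩ |
        ⟨ha, hb, c, hc, h1, h2⟩ | ⟨ha, hb, c, hc, h1, h2⟩)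
      · exact Or.inl ⟨hb, ha, J.symm hab⟩
      · exact Or.inr (Or.inl ⟨hb, ha, Or.inl (S2.symm hab)⟩)
      · exact Or.inr (Or.inl ⟨hb, ha, Or.inr ⟨d, c, hd, hc, S2.symm h3, J.symm h2, S2.symm h1⟩⟩)
      · exact Or.inr (Or.inr (Or.inr ⟨hb, ha, c, hc, J.symm h2, S2.symm h1⟩))
      · exact Or.inr (Or.inr (Or.inl ⟨hb, ha, c, hc, S2.symm h2, J.symm h1⟩))
    · rintro a b c hab hbc
      by_cases hb : b ∈ X
      · rcases hab with ⟨_, hb', _⟩ | ⟨ha, _, hL⟩ | ⟨_, hb', _⟩ | ⟨ha, _, d, hd, h1, h2⟩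
        · exact absurd hb hb'
        · -- a ∈ X
          rcases hbc with ⟨hb', _, _⟩ | ⟨_, hc, hR⟩ | ⟨_, hc, e, he, h3, h4⟩ | ⟨hb', _, _⟩
          · exact absurd hb hb'
          · refine Or.inr (Or.inl ⟨ha, hc, ?_⟩)
            rcases hL with h1 | ⟨c1, d1, hc1, hd1, h1, h2, h3⟩
            · rcases hR with h3 | ⟨c2, d2, hc2, hd2, h3, h4, h5⟩
              · exact Or.inl (S2.trans h1 h3)
              · exact Or.inr ⟨c2, d2, hc2, hd2, S2.trans h1 h3, h4, h5⟩
            · rcases hR with h4 | ⟨c2, d2, hc2, hd2, h4, h5, h6⟩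
              · exact Or.inr ⟨c1, d1, hc1, hd1, h1, h2, S2.trans h3 h4⟩
              · exact Or.inr ⟨c1, d2, hc1, hd2, h1,
                  J.trans h2 (J.trans (bridge hd1 hc2 (S2.trans h3 h4)) h5), h6⟩
          · refine Or.inr (Or.inr (Or.inl ⟨ha, hc, ?_⟩))
            rcases hL with h1 | ⟨c1, d1, hc1, hd1, h1, h2, h2'⟩
            · exact ⟨e, he, S2.trans h1 h3, h4⟩
            · exact ⟨c1, hc1, h1, J.trans h2 (J.trans (bridge hd1 he (S2.trans h2' h3)) h4)⟩
          · exact absurd hb hb'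
        · exact absurd hb hb'
        · -- a ∉ X, J a d, S2 d b
          rcases hbc with ⟨hb', _, _⟩ | ⟨_, hc, hR⟩ | ⟨_, hc, e, he, h3, h4⟩ | ⟨hb', _, _⟩
          · exact absurd hb hb'
          · refine Or.inr (Or.inr (Or.inr ⟨ha, hc, ?_⟩))
            rcases hR with h3 | ⟨c2, d2, hc2, hd2, h3, h4, h5⟩
            · exact ⟨d, hd, h1, S2.trans h2 h3⟩
            · exact ⟨d2, hd2, J.trans h1 (J.trans (bridge hd hc2 (S2.trans h2 h3)) h4), h5⟩
          · exact Or.inl ⟨ha, hc, J.trans h1 (J.trans (bridge hd he (S2.trans h2 h3)) h4)⟩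
          · exact absurd hb hb'
      · rcases hab with ⟨ha, _, h1⟩ | ⟨_, hb', _⟩ | ⟨ha, _, d, hd, h1, h2⟩ | ⟨_, hb', _⟩
        · rcases hbc with ⟨_, hc, h3⟩ | ⟨hb', _, _⟩ | ⟨hb', _, _⟩ | ⟨_, hc, e, he, h3, h4⟩
          · exact Or.inl ⟨ha, hc, J.trans h1 h3⟩
          · exact absurd hb' hb
          · exact absurd hb' hb
          · exact Or.inr (Or.inr (Or.inr ⟨ha, hc, e, he, J.trans h1 h3, h4⟩))
        · exact absurd hb' hb
        · rcases hbc with ⟨_, hc, h3⟩ | ⟨hb', _, _⟩ | ⟨hb', _, _⟩ | ⟨_, hc, e, he, h3, h4⟩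
          · exact Or.inr (Or.inr (Or.inl ⟨ha, hc, d, hd, h1, J.trans h2 h3⟩))
          · exact absurd hb' hb
          · exact absurd hb' hb
          · exact Or.inr (Or.inl ⟨ha, hc, Or.inr ⟨d, e, hd, he, h1, J.trans h2 h3, h4⟩⟩)
        · exact absurd hb' hb

end Aux

theorem stmt7 {V : Type*} (S1 S2 : Setoid V) (X : Set V) (h : S1.restrict X = S1)
    (x y : V) (hx : x ∉ X) (hy : y ∉ X) (hxy : x ≠ y) (hmem : (S1 ⊔ S2).r x y) :
    (S1 ⊔ (S2.restrict X)).r x y := by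
  have hS1 : ∀ a b : V, S1.r a b → a = b ∨ (a ∉ X ∧ b ∉ X) := by
    intro a b hab
    have : (S1.restrict X).r a b := by rw [h]; exact hab
    rcases this with rfl | ⟨_, ha, hb⟩
    · exact Or.inl rfl
    · exact Or.inr ⟨ha, hb⟩
  have h1 : S1 ≤ auxQSetoid S1 S2 X := by
    intro a b hab
    rcases hS1 a b hab with rfl | ⟨ha, hb⟩
    · exact (auxQSetoid S1 S2 X).refl a
    · exact Or.inl ⟨ha, hb, (Setoid.le_def.mp le_sup_left) hab⟩
  have h2 : S2 ≤ auxQSetoid S1 S2 X := by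
    intro a b hab
    by_cases ha : a ∈ X <;> by_cases hb : b ∈ X
    · exact Or.inr (Or.inl ⟨ha, hb, Or.inl hab⟩)
    · exact Or.inr (Or.inr (Or.inl ⟨ha, hb, b, hb, hab, (S1 ⊔ S2.restrict X).refl b⟩))
    · exact Or.inr (Or.inr (Or.inr ⟨ha, hb, a, ha, (S1 ⊔ S2.restrict X).refl a, hab⟩))
    · exact Or.inl ⟨ha, hb, auxJ_of_S2 S1 S2 X ha hb hab⟩
  have := (sup_le h1 h2 : S1 ⊔ S2 ≤ auxQSetoid S1 S2 X) hmem
  rcases this with ⟨_, _, hJ⟩ | ⟨ha, _, _⟩ | ⟨ha, _, _⟩ | ⟨_, hb, _⟩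
  · exact hJ
  · exact absurd ha hx
  · exact absurd ha hx
  · exact absurd hb hy
end
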